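/- Let ρ be a state of 𝔄 and φ a ℂ-linear functional on 𝔄 with φ(1) = 0 and |φ(a)| ≤ ρ(a) for every positive element a ∈ 𝔄. Then φ₀ := ρ + ½(φ + φ*) is a state of 𝔄. Moreover, φ₀(a) = ρ(a) for every a ∈ 𝔄 with φ(a) = 0 and φ(a*) = 0. -/

import Mathlib

open scoped ComplexOrder

/-- Let `ρ` be a state of a unital C*-algebra `A` and `φ` a linear functional with `φ(1) = 0`
and `|φ(a)| ≤ ρ(a)` for every positive `a`.  Then `φ₀ = ρ + ½(φ + φ*)` (where
`φ*(a) = conj (φ (a*))`) is a state of `A`, and `φ₀(a) = ρ(a)` whenever `φ(a) = 0 = φ(a*)`. -/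
theorem state_add_half_phi_add_phiStar_isState
    {A : Type*} [NormedRing A] [StarRing A] [CStarRing A]
    [NormedAlgebra ℂ A] [CompleteSpace A] [StarModule ℂ A]
    [PartialOrder A] [StarOrderedRing A]
    (ρ φ : A →ₗ[ℂ] ℂ)
    (hρpos : ∀ a : A, 0 ≤ a → 0 ≤ ρ a) (hρone : ρ 1 = 1)
    (hφone : φ 1 = 0)
    (hφbound : ∀ a : A, 0 ≤ a → ((‖φ a‖ : ℝ) : ℂ) ≤ ρ a)
    (φ₀ : A → ℂ)
    (hφ₀ : ∀ a : A, φ₀ a = ρ a + (1 / 2 : ℂ) * (φ a + (starRingEnd ℂ) (φ (star a)))) :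
    IsLinearMap ℂ φ₀ ∧ (∀ a : A, 0 ≤ a → 0 ≤ φ₀ a) ∧ φ₀ 1 = 1 ∧
      (∀ a : A, φ a = 0 → φ (star a) = 0 → φ₀ a = ρ a) := by
  refine ⟨⟨?_, ?_⟩, ?_, ?_, ?_⟩
  · intro x y
    simp only [hφ₀, map_add, star_add]
    ring
  · intro c x
    simp only [hφ₀, star_smul, map_smul, smul_eq_mul, map_mul, Complex.conj_conj,
      RingHom.id_apply, starRingEnd_apply, star_star]
    ring_nf
  · intro a ha
    have hsa : star a = a := (IsSelfAdjoint.of_nonneg ha)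
    have h1 := hφbound a ha
    rw [Complex.le_def] at h1
    rw [hφ₀, hsa, Complex.le_def]
    constructor
    · simp only [Complex.add_re, Complex.mul_re, Complex.add_im, Complex.zero_re]
      have habs := Complex.abs_re_le_norm (φ a)
      have := abs_le.1 habs
      simp only [Complex.conj_re, Complex.conj_im, Complex.ofReal_re] at *
      norm_num
      nlinarith [h1.1, this.1]
    · simp only [Complex.add_im, Complex.mul_im, Complex.zero_im, Complex.conj_re,
        Complex.conj_im, Complex.add_re]
      have h2 := h1.2
      simp only [Complex.ofReal_im] at h2
      norm_num
      linarith [h2]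
  · simp [hφ₀, hρone, hφone]
  · intro a h1 h2
    simp [hφ₀, h1, h2]
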